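/- Let K be a field, S = K[x_1, ..., x_n] with n ≥ 2, and I ⊆ S a squarefree monomial ideal. For k ∈ {0, 1} let I_k ⊆ K[x_1, ..., x_{n-1}] be the monomial ideal with I ∩ x_n^k K[x_1, ..., x_{n-1}] = x_n^k I_k. Suppose I_0 ≠ I_1, I_0 ≠ 0, and I_0 = ⊕_{i=1}^{r_0} u_i K[Z_i] and I_1 = ⊕_{j=1}^{r_1} v_j K[W_j] are squarefree Stanley decompositions (with Z_i, W_j ⊆ {x_1, ..., x_{n-1}}). Then I = (⊕_{i=1}^{r_0} u_i K[Z_i]) ⊕ (⊕_{j=1}^{r_1} v_j x_n K[W_j ∪ {x_n}]) is a squarefree Stanley decomposition of I. -/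

import Mathlib

open MvPolynomial

/-- The Stanley space `u K[Z]`: the `K`-span of all monomials `u * v` where `v` is a
monomial in the variables of `Z`; the monomial `u` is given by its exponent vector `d`. -/
noncomputable def stanleySpace (K : Type*) [Field K] {σ : Type*} (d : σ →₀ ℕ)
    (Z : Finset σ) : Submodule K (MvPolynomial σ K) :=
  Submodule.span K
    {m | ∃ e : σ →₀ ℕ, (e.support : Set σ) ⊆ (Z : Set σ) ∧ m = monomial (d + e) (1 : K)}

/-- A monomial ideal: an ideal generated by monomials. -/
def IsMonomialIdeal {K : Type*} [Field K] {σ : Type*}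
    (I : Ideal (MvPolynomial σ K)) : Prop :=
  ∃ G : Set (σ →₀ ℕ), I = Ideal.span ((fun d => monomial d (1 : K)) '' G)

/-- A squarefree monomial ideal: an ideal generated by squarefree monomials. -/
def IsSquarefreeMonomialIdeal {K : Type*} [Field K] {σ : Type*}
    (I : Ideal (MvPolynomial σ K)) : Prop :=
  ∃ G : Set (σ →₀ ℕ), (∀ d ∈ G, ∀ i, d i ≤ 1) ∧
    I = Ideal.span ((fun d => monomial d (1 : K)) '' G)

/-- `I^c`: the `K`-span of all monomials not belonging to `I`. -/
noncomputable def compSpan (K : Type*) [Field K] {σ : Type*}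
    (I : Ideal (MvPolynomial σ K)) : Submodule K (MvPolynomial σ K) :=
  Submodule.span K
    {m | ∃ d : σ →₀ ℕ, monomial d (1 : K) ∉ I ∧ m = monomial d (1 : K)}

/-- `x_n^k V ⊆ S`: the image in `S = K[x_1,…,x_n]` of a `K`-subspace
`V ⊆ S' = K[x_1,…,x_{n-1}]` under inclusion followed by multiplication by `x_n^k`. -/
noncomputable def shiftUp (K : Type*) [Field K] (n : ℕ) (k : ℕ)
    (V : Submodule K (MvPolynomial (Fin n) K)) :
    Submodule K (MvPolynomial (Fin (n + 1)) K) :=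
  (V.map (rename (Fin.castSucc : Fin n → Fin (n + 1)) :
      MvPolynomial (Fin n) K →ₐ[K] MvPolynomial (Fin (n + 1)) K).toLinearMap).map
    (LinearMap.mulLeft K ((X (Fin.last n) : MvPolynomial (Fin (n + 1)) K) ^ k))

/-- The exponent vector of `u · x_{n+1}^k`, where `u` is a monomial of
`S' = K[x_1,…,x_n]` with exponent vector `d`. -/
noncomputable def shiftExp (n : ℕ) (k : ℕ) (d : Fin n →₀ ℕ) : Fin (n + 1) →₀ ℕ :=
  Finsupp.mapDomain (Fin.castSucc : Fin n → Fin (n + 1)) d + Finsupp.single (Fin.last n) k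


namespace JanetAux

variable {K : Type*} [Field K] {σ : Type*}

noncomputable def SpanM (K : Type*) [Field K] {σ : Type*} (A : Set (σ →₀ ℕ)) :
    Submodule K (MvPolynomial σ K) :=
  Submodule.span K {m | ∃ d ∈ A, m = monomial d (1 : K)}

lemma mem_spanM {p : MvPolynomial σ K} {A : Set (σ →₀ ℕ)} :
    p ∈ SpanM K A ↔ ↑p.support ⊆ A := by
  classical
  constructor
  · intro hp
    refine Submodule.span_induction ?_ ?_ ?_ ?_ hp
    · rintro m ⟨d, hd, rfl⟩
      rw [support_monomial, if_neg one_ne_zero]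
      simpa using hd
    · simp
    · intro x y _ _ hx hy
      refine subset_trans ?_ (Set.union_subset hx hy)
      rw [← Finset.coe_union]
      exact Finset.coe_subset.2 MvPolynomial.support_add
    · intro a x _ hx
      exact subset_trans (Finset.coe_subset.2 MvPolynomial.support_smul) hx
  · intro h
    rw [MvPolynomial.as_sum p]
    refine Submodule.sum_mem _ fun d hd => ?_
    have : monomial d (coeff d p) = (coeff d p) • monomial d (1:K) := by
      rw [MvPolynomial.smul_monomial, smul_eq_mul, mul_one]
    rw [this]
    exact Submodule.smul_mem _ _ (Submodule.subset_span ⟨d, h hd, rfl⟩)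

lemma monomial_mem_spanM {d : σ →₀ ℕ} {A : Set (σ →₀ ℕ)} :
    monomial d (1:K) ∈ SpanM K A ↔ d ∈ A := by
  classical
  rw [mem_spanM, support_monomial, if_neg one_ne_zero]
  simp

lemma spanM_mono {A B : Set (σ →₀ ℕ)} (h : A ⊆ B) : SpanM K A ≤ SpanM (σ := σ) K B := by
  intro p hp
  rw [mem_spanM] at hp ⊢
  exact hp.trans h

lemma disjoint_spanM {A B : Set (σ →₀ ℕ)} (h : Disjoint A B) :
    Disjoint (SpanM (σ := σ) K A) (SpanM K B) := by
  rw [Submodule.disjoint_def]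
  intro p hpA hpB
  rw [mem_spanM] at hpA hpB
  rw [← MvPolynomial.support_eq_empty, ← Finset.coe_eq_empty]
  exact Set.subset_eq_empty (Set.subset_inter hpA hpB |>.trans h.le_bot) rfl

lemma spanM_iUnion {ι : Type*} (A : ι → Set (σ →₀ ℕ)) :
    SpanM (σ := σ) K (⋃ i, A i) = ⨆ i, SpanM K (A i) := by
  apply le_antisymm
  · rw [SpanM, Submodule.span_le]
    rintro m ⟨d, hd, rfl⟩
    obtain ⟨i, hi⟩ := Set.mem_iUnion.1 hd
    exact Submodule.mem_iSup_of_mem i (monomial_mem_spanM.2 hi)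
  · exact iSup_le fun i => spanM_mono (Set.subset_iUnion A i)

lemma stanleySpace_eq (d : σ →₀ ℕ) (Z : Finset σ) :
    stanleySpace K d Z =
      SpanM K {b | ∃ e : σ →₀ ℕ, (e.support : Set σ) ⊆ (Z : Set σ) ∧ b = d + e} := by
  unfold stanleySpace SpanM
  congr 1
  ext m
  constructor
  · rintro ⟨e, he, rfl⟩; exact ⟨d + e, ⟨e, he, rfl⟩, rfl⟩
  · rintro ⟨b, ⟨e, he, rfl⟩, rfl⟩; exact ⟨e, he, rfl⟩

lemma last_notin_range (n : ℕ) : Fin.last n ∉ Set.range (Fin.castSucc : Fin n → Fin (n+1)) := by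
  rintro ⟨i, hi⟩
  exact absurd hi (Fin.castSucc_lt_last i).ne

noncomputable def down {n : ℕ} (b : Fin (n+1) →₀ ℕ) : Fin n →₀ ℕ :=
  Finsupp.comapDomain Fin.castSucc b ((Fin.castSucc_injective n).injOn)

@[simp] lemma down_apply {n : ℕ} (b : Fin (n+1) →₀ ℕ) (i : Fin n) :
    down b i = b i.castSucc := rfl

@[simp] lemma shiftExp_castSucc (n k : ℕ) (d : Fin n →₀ ℕ) (i : Fin n) :
    shiftExp n k d i.castSucc = d i := by
  unfold shiftExp
  rw [Finsupp.add_apply, Finsupp.mapDomain_apply (Fin.castSucc_injective n),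
    Finsupp.single_eq_of_ne' (Fin.castSucc_lt_last i).ne', add_zero]

@[simp] lemma shiftExp_last (n k : ℕ) (d : Fin n →₀ ℕ) :
    shiftExp n k d (Fin.last n) = k := by
  unfold shiftExp
  rw [Finsupp.add_apply, Finsupp.mapDomain_notin_range _ _ (last_notin_range n),
    Finsupp.single_eq_same, zero_add]

@[simp] lemma down_shiftExp (n k : ℕ) (d : Fin n →₀ ℕ) : down (shiftExp n k d) = d := by
  ext i; simp

lemma shiftExp_down {n : ℕ} (b : Fin (n+1) →₀ ℕ) :
    shiftExp n (b (Fin.last n)) (down b) = b := by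
  ext j
  refine Fin.lastCases ?_ (fun i => ?_) j
  · simp
  · simp

lemma mapDomain_last {n : ℕ} (d : Fin n →₀ ℕ) :
    Finsupp.mapDomain (Fin.castSucc : Fin n → Fin (n+1)) d (Fin.last n) = 0 :=
  Finsupp.mapDomain_notin_range _ _ (last_notin_range n)

lemma shiftExp_zero (n : ℕ) (d : Fin n →₀ ℕ) :
    shiftExp n 0 d = Finsupp.mapDomain (Fin.castSucc : Fin n → Fin (n+1)) d := by
  unfold shiftExp; rw [Finsupp.single_zero, add_zero]

variable {n : ℕ}

lemma mem_shiftUp {k : ℕ} {V : Submodule K (MvPolynomial (Fin n) K)}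
    {p : MvPolynomial (Fin (n+1)) K} :
    p ∈ shiftUp K n k V ↔
      ∃ q ∈ V, (X (Fin.last n) : MvPolynomial (Fin (n+1)) K) ^ k * rename Fin.castSucc q = p := by
  unfold shiftUp
  constructor
  · rintro ⟨y, ⟨q, hq, rfl⟩, rfl⟩
    exact ⟨q, hq, rfl⟩
  · rintro ⟨q, hq, rfl⟩
    exact ⟨rename Fin.castSucc q, ⟨q, hq, rfl⟩, rfl⟩

lemma hren0 (d : Fin n →₀ ℕ) :
    rename (Fin.castSucc : Fin n → Fin (n+1)) (monomial d (1:K)) =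
      monomial (shiftExp n 0 d) 1 := by
  rw [rename_monomial, shiftExp_zero]

lemma hren1 (d : Fin n →₀ ℕ) :
    (X (Fin.last n) : MvPolynomial (Fin (n+1)) K) *
      rename (Fin.castSucc : Fin n → Fin (n+1)) (monomial d (1:K)) =
      monomial (shiftExp n 1 d) 1 := by
  rw [rename_monomial, ← pow_one (X (Fin.last n) : MvPolynomial (Fin (n+1)) K),
    X_pow_eq_monomial, monomial_mul, one_mul]
  unfold shiftExp
  rw [add_comm (Finsupp.mapDomain (Fin.castSucc : Fin n → Fin (n+1)) d)]

lemma slice0 (I : Ideal (MvPolynomial (Fin (n+1)) K)) (I0 : Ideal (MvPolynomial (Fin n) K))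
    (hI0 : Submodule.restrictScalars K I ⊓ shiftUp K n 0 ⊤ =
      shiftUp K n 0 (Submodule.restrictScalars K I0))
    (d : Fin n →₀ ℕ) : monomial (shiftExp n 0 d) (1:K) ∈ I ↔ monomial d (1:K) ∈ I0 := by
  constructor
  · intro h
    have hmem : monomial (shiftExp n 0 d) (1:K) ∈
        Submodule.restrictScalars K I ⊓ shiftUp K n 0 ⊤ := by
      refine ⟨h, mem_shiftUp.2 ⟨monomial d 1, trivial, ?_⟩⟩
      rw [pow_zero, one_mul, hren0]
    rw [hI0] at hmem
    obtain ⟨q, hq, hqe⟩ := mem_shiftUp.1 hmem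
    rw [pow_zero, one_mul, ← hren0] at hqe
    rwa [← rename_injective _ (Fin.castSucc_injective n) hqe]
  · intro h
    have : monomial (shiftExp n 0 d) (1:K) ∈ shiftUp K n 0 (Submodule.restrictScalars K I0) :=
      mem_shiftUp.2 ⟨monomial d 1, h, by rw [pow_zero, one_mul, hren0]⟩
    rw [← hI0] at this
    exact this.1

lemma slice1 (I : Ideal (MvPolynomial (Fin (n+1)) K)) (I1 : Ideal (MvPolynomial (Fin n) K))
    (hI1 : Submodule.restrictScalars K I ⊓ shiftUp K n 1 ⊤ =
      shiftUp K n 1 (Submodule.restrictScalars K I1))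
    (d : Fin n →₀ ℕ) : monomial (shiftExp n 1 d) (1:K) ∈ I ↔ monomial d (1:K) ∈ I1 := by
  constructor
  · intro h
    have hmem : monomial (shiftExp n 1 d) (1:K) ∈
        Submodule.restrictScalars K I ⊓ shiftUp K n 1 ⊤ := by
      refine ⟨h, mem_shiftUp.2 ⟨monomial d 1, trivial, ?_⟩⟩
      rw [pow_one, hren1]
    rw [hI1] at hmem
    obtain ⟨q, hq, hqe⟩ := mem_shiftUp.1 hmem
    rw [pow_one, ← hren1] at hqe
    have hq' := mul_left_cancel₀ (X_ne_zero (Fin.last n)) hqe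
    rwa [← rename_injective _ (Fin.castSucc_injective n) hq']
  · intro h
    have : monomial (shiftExp n 1 d) (1:K) ∈ shiftUp K n 1 (Submodule.restrictScalars K I1) :=
      mem_shiftUp.2 ⟨monomial d 1, h, by rw [pow_one, hren1]⟩
    rw [← hI1] at this
    exact this.1

end JanetAux

open JanetAux

/-- (Here `S = K[x_1,…,x_{n+1}]`, `S' = K[x_1,…,x_n]`, `n ≥ 1`.) Let
`I ⊆ S` be a squarefree monomial ideal with slices `I_0 ≠ I_1`, `I_0 ≠ 0` (determined by
`I ∩ x_{n+1}^k S' = x_{n+1}^k I_k` for `k ∈ {0,1}`). Given squarefree Stanley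
decompositions `I_0 = ⊕_i u_i K[Z_i]` and `I_1 = ⊕_j v_j K[W_j]`, the decomposition
`I = (⊕_i u_i K[Z_i]) ⊕ (⊕_j v_j x_{n+1} K[W_j ∪ {x_{n+1}}])` is a squarefree Stanley
decomposition of `I`. -/
theorem janet_squarefree_stanley_decomposition (K : Type*) [Field K] (n : ℕ) (hn : 1 ≤ n)
    (I : Ideal (MvPolynomial (Fin (n + 1)) K)) (hI : IsSquarefreeMonomialIdeal I)
    (I0 I1 : Ideal (MvPolynomial (Fin n) K))
    (hI0 : Submodule.restrictScalars K I ⊓ shiftUp K n 0 ⊤ =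
      shiftUp K n 0 (Submodule.restrictScalars K I0))
    (hI1 : Submodule.restrictScalars K I ⊓ shiftUp K n 1 ⊤ =
      shiftUp K n 1 (Submodule.restrictScalars K I1))
    (hne : I0 ≠ I1) (h0ne : I0 ≠ ⊥)
    (r0 r1 : ℕ) (u : Fin r0 → (Fin n →₀ ℕ)) (Z : Fin r0 → Finset (Fin n))
    (v : Fin r1 → (Fin n →₀ ℕ)) (W : Fin r1 → Finset (Fin n))
    (hu : ∀ i, (∀ j, u i j ≤ 1) ∧ (u i).support ⊆ Z i)
    (hv : ∀ i, (∀ j, v i j ≤ 1) ∧ (v i).support ⊆ W i)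
    (hdec0 : iSupIndep (fun i => stanleySpace K (u i) (Z i)) ∧
      (⨆ i, stanleySpace K (u i) (Z i)) = Submodule.restrictScalars K I0)
    (hdec1 : iSupIndep (fun j => stanleySpace K (v j) (W j)) ∧
      (⨆ j, stanleySpace K (v j) (W j)) = Submodule.restrictScalars K I1) :
    (∀ i : Fin r0, (∀ j, shiftExp n 0 (u i) j ≤ 1) ∧
      (shiftExp n 0 (u i)).support ⊆ (Z i).image Fin.castSucc) ∧
    (∀ j : Fin r1, (∀ l, shiftExp n 1 (v j) l ≤ 1) ∧
      (shiftExp n 1 (v j)).support ⊆ insert (Fin.last n) ((W j).image Fin.castSucc)) ∧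
    iSupIndep (fun x : Fin r0 ⊕ Fin r1 =>
      Sum.elim
        (fun i => stanleySpace K (shiftExp n 0 (u i)) ((Z i).image Fin.castSucc))
        (fun j => stanleySpace K (shiftExp n 1 (v j))
          (insert (Fin.last n) ((W j).image Fin.castSucc))) x) ∧
    (⨆ x : Fin r0 ⊕ Fin r1,
      Sum.elim
        (fun i => stanleySpace K (shiftExp n 0 (u i)) ((Z i).image Fin.castSucc))
        (fun j => stanleySpace K (shiftExp n 1 (v j))
          (insert (Fin.last n) ((W j).image Fin.castSucc))) x) =
      Submodule.restrictScalars K I := by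
  classical
  obtain ⟨G, hGsf, hGspan⟩ := hI
  have hmemI : ∀ b : Fin (n+1) →₀ ℕ, monomial b (1:K) ∈ I ↔ ∃ g ∈ G, g ≤ b := by
    intro b
    rw [hGspan, mem_ideal_span_monomial_image]
    constructor
    · intro h
      refine h b ?_
      rw [support_monomial, if_neg one_ne_zero]
      exact Finset.mem_singleton_self b
    · intro h d hd
      rw [support_monomial, if_neg one_ne_zero, Finset.mem_singleton] at hd
      subst hd; exact h
  have hsq : ∀ t, 1 ≤ t → ∀ d : Fin n →₀ ℕ,
      (monomial (shiftExp n t d) (1:K) ∈ I ↔ monomial (shiftExp n 1 d) (1:K) ∈ I) := by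
    intro t ht d
    rw [hmemI, hmemI]
    refine exists_congr fun g => and_congr_right fun hg => ?_
    rw [Finsupp.le_def, Finsupp.le_def]
    constructor
    · intro h j
      refine Fin.lastCases ?_ (fun i => ?_) j
      · rw [shiftExp_last]; exact hGsf g hg _
      · rw [shiftExp_castSucc]
        have := h i.castSucc
        rwa [shiftExp_castSucc] at this
    · intro h j
      refine Fin.lastCases ?_ (fun i => ?_) j
      · rw [shiftExp_last]
        have h2 := h (Fin.last n)
        rw [shiftExp_last] at h2
        exact le_trans h2 ht
      · rw [shiftExp_castSucc]
        have := h i.castSucc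
        rwa [shiftExp_castSucc] at this
  have h0 := slice0 I I0 hI0
  have h1 := slice1 I I1 hI1
  have hmemHigh : ∀ b : Fin (n+1) →₀ ℕ, 1 ≤ b (Fin.last n) →
      (monomial b (1:K) ∈ I ↔ monomial (down b) (1:K) ∈ I1) := by
    intro b hb
    conv_lhs => rw [← shiftExp_down b]
    rw [hsq _ hb, h1]
  have hI0mem : ∀ d : Fin n →₀ ℕ, monomial d (1:K) ∈ I0 ↔
      ∃ i, ∃ e : Fin n →₀ ℕ, (e.support : Set (Fin n)) ⊆ ↑(Z i) ∧ d = u i + e := by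
    intro d
    have h2 : (⨆ i, stanleySpace K (u i) (Z i)) =
        SpanM K (⋃ i, {b | ∃ e : Fin n →₀ ℕ,
          (e.support : Set (Fin n)) ⊆ ↑(Z i) ∧ b = u i + e}) := by
      rw [spanM_iUnion]
      exact iSup_congr fun i => stanleySpace_eq _ _
    have h3 : monomial d (1:K) ∈ I0 ↔
        monomial d (1:K) ∈ Submodule.restrictScalars K I0 := Iff.rfl
    rw [h3, ← hdec0.2, h2, monomial_mem_spanM]
    simp only [Set.mem_iUnion, Set.mem_setOf_eq]
  have hI1mem : ∀ d : Fin n →₀ ℕ, monomial d (1:K) ∈ I1 ↔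
      ∃ j, ∃ e : Fin n →₀ ℕ, (e.support : Set (Fin n)) ⊆ ↑(W j) ∧ d = v j + e := by
    intro d
    have h2 : (⨆ j, stanleySpace K (v j) (W j)) =
        SpanM K (⋃ j, {b | ∃ e : Fin n →₀ ℕ,
          (e.support : Set (Fin n)) ⊆ ↑(W j) ∧ b = v j + e}) := by
      rw [spanM_iUnion]
      exact iSup_congr fun j => stanleySpace_eq _ _
    have h3 : monomial d (1:K) ∈ I1 ↔
        monomial d (1:K) ∈ Submodule.restrictScalars K I1 := Iff.rfl
    rw [h3, ← hdec1.2, h2, monomial_mem_spanM]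
    simp only [Set.mem_iUnion, Set.mem_setOf_eq]
  set A : Fin r0 → Set (Fin (n+1) →₀ ℕ) := fun i =>
    {b | ∃ e : Fin (n+1) →₀ ℕ, (e.support : Set (Fin (n+1))) ⊆ ↑((Z i).image Fin.castSucc) ∧
      b = shiftExp n 0 (u i) + e} with hAdef
  set B : Fin r1 → Set (Fin (n+1) →₀ ℕ) := fun j =>
    {b | ∃ e : Fin (n+1) →₀ ℕ,
      (e.support : Set (Fin (n+1))) ⊆ ↑(insert (Fin.last n) ((W j).image Fin.castSucc)) ∧
      b = shiftExp n 1 (v j) + e} with hBdef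
  have hElim : ∀ x : Fin r0 ⊕ Fin r1,
      Sum.elim
        (fun i => stanleySpace K (shiftExp n 0 (u i)) ((Z i).image Fin.castSucc))
        (fun j => stanleySpace K (shiftExp n 1 (v j))
          (insert (Fin.last n) ((W j).image Fin.castSucc))) x
      = SpanM K (Sum.elim A B x) := by
    rintro (i | j)
    · exact stanleySpace_eq _ _
    · exact stanleySpace_eq _ _
  have hA : ∀ i b, b ∈ A i ↔ (b (Fin.last n) = 0 ∧
      ∃ e : Fin n →₀ ℕ, (e.support : Set (Fin n)) ⊆ ↑(Z i) ∧ down b = u i + e) := by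
    intro i b
    constructor
    · rintro ⟨e, he, rfl⟩
      have helast : e (Fin.last n) = 0 := by
        by_contra h
        have h2 := he (Finsupp.mem_support_iff.2 h)
        simp only [Finset.coe_image, Set.mem_image, Finset.mem_coe] at h2
        obtain ⟨x, _, hx⟩ := h2
        exact absurd hx (Fin.castSucc_lt_last x).ne
      refine ⟨by rw [Finsupp.add_apply, shiftExp_last, helast, add_zero], down e, ?_, ?_⟩
      · intro j hj
        simp only [Finset.mem_coe, Finsupp.mem_support_iff, down_apply] at hj
        have h2 := he (Finsupp.mem_support_iff.2 hj)
        simp only [Finset.coe_image, Set.mem_image, Finset.mem_coe] at h2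
        obtain ⟨x, hx, hxe⟩ := h2
        rwa [← Fin.castSucc_injective n hxe]
      · ext j
        simp [Finsupp.add_apply]
    · rintro ⟨hb0, e, he, hde⟩
      refine ⟨Finsupp.mapDomain Fin.castSucc e, ?_, ?_⟩
      · rw [Finsupp.mapDomain_support_of_injective (Fin.castSucc_injective n)]
        exact_mod_cast Finset.coe_subset.2
          (Finset.image_subset_image (Finset.coe_subset.1 (by exact_mod_cast he)))
      · ext j
        refine Fin.lastCases ?_ (fun l => ?_) j
        · rw [hb0, Finsupp.add_apply, shiftExp_last, mapDomain_last]
        · have h2 := DFunLike.congr_fun hde l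
          rw [down_apply, Finsupp.add_apply] at h2
          rw [h2, Finsupp.add_apply, shiftExp_castSucc,
            Finsupp.mapDomain_apply (Fin.castSucc_injective n)]
  have hB : ∀ j b, b ∈ B j ↔ (1 ≤ b (Fin.last n) ∧
      ∃ e : Fin n →₀ ℕ, (e.support : Set (Fin n)) ⊆ ↑(W j) ∧ down b = v j + e) := by
    intro j b
    constructor
    · rintro ⟨e, he, rfl⟩
      refine ⟨by rw [Finsupp.add_apply, shiftExp_last]; omega, down e, ?_, ?_⟩
      · intro l hl
        simp only [Finset.mem_coe, Finsupp.mem_support_iff, down_apply] at hl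
        have h2 := he (Finsupp.mem_support_iff.2 hl)
        simp only [Finset.coe_insert, Set.mem_insert_iff, Finset.coe_image, Set.mem_image,
          Finset.mem_coe] at h2
        rcases h2 with h2 | ⟨x, hx, hxe⟩
        · exact absurd h2 (Fin.castSucc_lt_last l).ne
        · rwa [← Fin.castSucc_injective n hxe]
      · ext l
        simp [Finsupp.add_apply]
    · rintro ⟨hb1, e, he, hde⟩
      refine ⟨Finsupp.mapDomain Fin.castSucc e +
        Finsupp.single (Fin.last n) (b (Fin.last n) - 1), ?_, ?_⟩
      · have hsub : (Finsupp.mapDomain Fin.castSucc e +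
            Finsupp.single (Fin.last n) (b (Fin.last n) - 1)).support ⊆
            insert (Fin.last n) ((W j).image Fin.castSucc) := by
          refine Finsupp.support_add.trans (Finset.union_subset ?_ ?_)
          · rw [Finsupp.mapDomain_support_of_injective (Fin.castSucc_injective n)]
            exact (Finset.image_subset_image (Finset.coe_subset.1 he)).trans
              (Finset.subset_insert _ _)
          · exact Finsupp.support_single_subset.trans
              (Finset.singleton_subset_iff.2 (Finset.mem_insert_self _ _))
        exact_mod_cast Finset.coe_subset.2 hsub
      · ext l
        refine Fin.lastCases ?_ (fun m => ?_) l
        · rw [Finsupp.add_apply, shiftExp_last, Finsupp.add_apply, mapDomain_last,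
            Finsupp.single_eq_same, zero_add]
          omega
        · have h2 := DFunLike.congr_fun hde m
          rw [down_apply, Finsupp.add_apply] at h2
          rw [h2, Finsupp.add_apply, shiftExp_castSucc, Finsupp.add_apply,
            Finsupp.mapDomain_apply (Fin.castSucc_injective n),
            Finsupp.single_eq_of_ne' (Fin.castSucc_lt_last m).ne', add_zero]
  have hcoverA : ∀ b : Fin (n+1) →₀ ℕ, b (Fin.last n) = 0 →
      (monomial b (1:K) ∈ I ↔ ∃ i, b ∈ A i) := by
    intro b hb
    have hL : monomial b (1:K) ∈ I ↔ monomial (down b) (1:K) ∈ I0 := by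
      conv_lhs => rw [show b = shiftExp n 0 (down b) from by rw [← hb, shiftExp_down]]
      exact h0 _
    rw [hL, hI0mem]
    refine exists_congr fun i => ?_
    rw [hA]
    simp [hb]
  have hcoverB : ∀ b : Fin (n+1) →₀ ℕ, 1 ≤ b (Fin.last n) →
      (monomial b (1:K) ∈ I ↔ ∃ j, b ∈ B j) := by
    intro b hb
    rw [hmemHigh b hb, hI1mem]
    refine exists_congr fun j => ?_
    rw [hB]
    simp [hb]
  have hmono_ne : ∀ d : Fin n →₀ ℕ, (monomial d (1:K) : MvPolynomial (Fin n) K) ≠ 0 := by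
    intro d h
    have := MvPolynomial.coeff_monomial d d (1:K)
    rw [h, if_pos rfl, MvPolynomial.coeff_zero] at this
    exact one_ne_zero this.symm
  have hdisj0 : ∀ i i', i ≠ i' → ∀ d : Fin n →₀ ℕ,
      (∃ e : Fin n →₀ ℕ, (e.support : Set (Fin n)) ⊆ ↑(Z i) ∧ d = u i + e) →
      (∃ e : Fin n →₀ ℕ, (e.support : Set (Fin n)) ⊆ ↑(Z i') ∧ d = u i' + e) → False := by
    intro i i' hne' d h₁ h₂
    have hd := hdec0.1.pairwiseDisjoint hne'
    have m1 : monomial d (1:K) ∈ stanleySpace K (u i) (Z i) := by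
      obtain ⟨e, he, rfl⟩ := h₁
      exact Submodule.subset_span ⟨e, he, rfl⟩
    have m2 : monomial d (1:K) ∈ stanleySpace K (u i') (Z i') := by
      obtain ⟨e, he, rfl⟩ := h₂
      exact Submodule.subset_span ⟨e, he, rfl⟩
    exact hmono_ne d (Submodule.disjoint_def.1 hd _ m1 m2)
  have hdisj1 : ∀ j j', j ≠ j' → ∀ d : Fin n →₀ ℕ,
      (∃ e : Fin n →₀ ℕ, (e.support : Set (Fin n)) ⊆ ↑(W j) ∧ d = v j + e) →
      (∃ e : Fin n →₀ ℕ, (e.support : Set (Fin n)) ⊆ ↑(W j') ∧ d = v j' + e) → False := by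
    intro j j' hne' d h₁ h₂
    have hd := hdec1.1.pairwiseDisjoint hne'
    have m1 : monomial d (1:K) ∈ stanleySpace K (v j) (W j) := by
      obtain ⟨e, he, rfl⟩ := h₁
      exact Submodule.subset_span ⟨e, he, rfl⟩
    have m2 : monomial d (1:K) ∈ stanleySpace K (v j') (W j') := by
      obtain ⟨e, he, rfl⟩ := h₂
      exact Submodule.subset_span ⟨e, he, rfl⟩
    exact hmono_ne d (Submodule.disjoint_def.1 hd _ m1 m2)
  have hNdisj : Pairwise (Function.onFun Disjoint (Sum.elim A B)) := by
    intro x y hxy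
    rw [Function.onFun, Set.disjoint_left]
    intro b hbx hby
    cases x with
    | inl i =>
      cases y with
      | inl i' =>
        have hii : i ≠ i' := fun h => hxy (by rw [h])
        obtain ⟨_, hx⟩ := (hA i b).1 hbx
        obtain ⟨_, hy⟩ := (hA i' b).1 hby
        exact hdisj0 i i' hii (down b) hx hy
      | inr j =>
        have h₁ := ((hA i b).1 hbx).1
        have h₂ := ((hB j b).1 hby).1
        omega
    | inr j =>
      cases y with
      | inl i =>
        have h₁ := ((hB j b).1 hbx).1
        have h₂ := ((hA i b).1 hby).1
        omega
      | inr j' =>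
        have hjj : j ≠ j' := fun h => hxy (by rw [h])
        obtain ⟨_, hx⟩ := ((hB j b).1 hbx)
        obtain ⟨_, hy⟩ := ((hB j' b).1 hby)
        exact hdisj1 j j' hjj (down b) hx hy
  have hIeq : Submodule.restrictScalars K I = SpanM K {b | monomial b (1:K) ∈ I} := by
    apply le_antisymm
    · intro p hp
      rw [mem_spanM]
      intro d hd
      rw [Submodule.restrictScalars_mem, hGspan, mem_ideal_span_monomial_image] at hp
      obtain ⟨g, hg, hgle⟩ := hp d (Finset.mem_coe.1 hd)
      show monomial d (1:K) ∈ I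
      have hgmem : monomial g (1:K) ∈ I := by
        rw [hGspan]
        exact Ideal.subset_span ⟨g, hg, rfl⟩
      have h2 : monomial d (1:K) = monomial (d - g) (1:K) * monomial g 1 := by
        rw [monomial_mul, one_mul, tsub_add_cancel_of_le hgle]
      rw [h2]
      exact Ideal.mul_mem_left _ _ hgmem
    · rw [SpanM, Submodule.span_le]
      rintro m ⟨d, hd, rfl⟩
      exact hd
  refine ⟨?_, ?_, ?_, ?_⟩
  · intro i
    constructor
    · intro j
      refine Fin.lastCases ?_ (fun l => ?_) j
      · rw [shiftExp_last]; exact Nat.zero_le 1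
      · rw [shiftExp_castSucc]; exact (hu i).1 l
    · rw [shiftExp_zero, Finsupp.mapDomain_support_of_injective (Fin.castSucc_injective n)]
      exact Finset.image_subset_image (hu i).2
  · intro j
    constructor
    · intro l
      refine Fin.lastCases ?_ (fun l' => ?_) l
      · rw [shiftExp_last]
      · rw [shiftExp_castSucc]; exact (hv j).1 l'
    · show (Finsupp.mapDomain (Fin.castSucc : Fin n → Fin (n+1)) (v j) +
        Finsupp.single (Fin.last n) 1).support ⊆ _
      refine Finsupp.support_add.trans (Finset.union_subset ?_ ?_)
      · rw [Finsupp.mapDomain_support_of_injective (Fin.castSucc_injective n)]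
        exact (Finset.image_subset_image (hv j).2).trans (Finset.subset_insert _ _)
      · exact Finsupp.support_single_subset.trans
          (Finset.singleton_subset_iff.2 (Finset.mem_insert_self _ _))
  · rw [iSupIndep_def]
    intro x
    simp only [hElim]
    have hle : (⨆ y, ⨆ _ : y ≠ x, SpanM K (Sum.elim A B y)) ≤
        SpanM K (⋃ y ∈ {y | y ≠ x}, Sum.elim A B y) := by
      refine iSup_le fun y => iSup_le fun hy => spanM_mono ?_
      exact Set.subset_biUnion_of_mem hy
    refine Disjoint.mono_right hle (disjoint_spanM ?_)
    rw [Set.disjoint_left]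
    intro b hbx hby
    simp only [Set.mem_iUnion, Set.mem_setOf_eq] at hby
    obtain ⟨y, hy, hby⟩ := hby
    exact Set.disjoint_left.1 (hNdisj hy) hby hbx
  · have hset : (⋃ x, Sum.elim A B x) = {b | monomial b (1:K) ∈ I} := by
      ext b
      simp only [Set.mem_iUnion, Set.mem_setOf_eq]
      constructor
      · rintro ⟨x, hx⟩
        cases x with
        | inl i => exact (hcoverA b ((hA i b).1 hx).1).2 ⟨i, hx⟩
        | inr j => exact (hcoverB b ((hB j b).1 hx).1).2 ⟨j, hx⟩
      · intro hb
        by_cases h0b : b (Fin.last n) = 0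
        · obtain ⟨i, hi⟩ := (hcoverA b h0b).1 hb
          exact ⟨Sum.inl i, hi⟩
        · obtain ⟨j, hj⟩ := (hcoverB b (by omega)).1 hb
          exact ⟨Sum.inr j, hj⟩
    simp only [hElim]
    rw [← spanM_iUnion, hset, hIeq]
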